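/- Fix w_t, w̄ ∈ ℝ^{d+1}, λ = ‖w̄ − w_t‖ > 0, step size η > 0, and difficulty score Ψ ≥ 0. Let x be a random vector, and given x choose the label y = xᵗw̄ + Ψ or y = xᵗw̄ − Ψ each with probability 1/2 independently of x. Let s = −2η(xᵗw_t − y)x be the SGD step for squared loss, and let Δ(Ψ) = E[‖w_t − w̄‖² − ‖w_t + s − w̄‖²]. Writing r = ‖x‖ and cos θ = xᵗ(w̄ − w_t)/(rλ) (for x ≠ 0), it holds that Δ(Ψ) = 4η λ² E[r² cos²θ] − 4η² λ² E[r⁴ cos²θ] − 4η² Ψ² E[r²]. -/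

import Mathlib

open scoped RealInnerProductSpace
open MeasureTheory ProbabilityTheory

/-- closed form for the expected one-step convergence rate of SGD on squared loss
with random data point `x` and label `y = ⟪x, w̄⟫ ± Ψ` (sign `ε = ±1` uniform, independent of
`x`):  `Δ(Ψ) = 4ηλ²E[r²cos²θ] − 4η²λ²E[r⁴cos²θ] − 4η²Ψ²E[r²]`. -/
theorem stmt2 {d : ℕ} {Ω : Type*} [MeasurableSpace Ω] (μ : Measure Ω) [IsProbabilityMeasure μ]
    (wt wbar : EuclideanSpace ℝ (Fin (d + 1)))
    (lam η Ψ : ℝ) (hlam : lam = ‖wbar - wt‖) (hlam_pos : 0 < lam) (hη : 0 < η) (hΨ : 0 ≤ Ψ)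
    (x : Ω → EuclideanSpace ℝ (Fin (d + 1))) (ε : Ω → ℝ)
    (hx : Measurable x) (hε : Measurable ε)
    (hεval : ∀ ω, ε ω = 1 ∨ ε ω = -1)
    (hεhalf : μ {ω | ε ω = 1} = 1 / 2)
    (hindep : IndepFun ε x μ)
    (y : Ω → ℝ) (hy : ∀ ω, y ω = ⟪x ω, wbar⟫ + ε ω * Ψ)
    (s : Ω → EuclideanSpace ℝ (Fin (d + 1)))
    (hs : ∀ ω, s ω = (-(2 * η * (⟪x ω, wt⟫ - y ω))) • x ω)
    (r : Ω → ℝ) (hr : ∀ ω, r ω = ‖x ω‖)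
    (cosθ : Ω → ℝ) (hcos : ∀ ω, cosθ ω = ⟪x ω, wbar - wt⟫ / (r ω * lam))
    (hInt1 : Integrable (fun ω => r ω ^ 2 * cosθ ω ^ 2) μ)
    (hInt2 : Integrable (fun ω => r ω ^ 4 * cosθ ω ^ 2) μ)
    (hInt3 : Integrable (fun ω => r ω ^ 2) μ)
    (hInt4 : Integrable (fun ω => r ω ^ 4) μ)
    (hInt5 : Integrable (fun ω => ‖wt - wbar‖ ^ 2 - ‖(wt + s ω) - wbar‖ ^ 2) μ) :
    ∫ ω, (‖wt - wbar‖ ^ 2 - ‖(wt + s ω) - wbar‖ ^ 2) ∂μ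
      = 4 * η * lam ^ 2 * ∫ ω, r ω ^ 2 * cosθ ω ^ 2 ∂μ
        - 4 * η ^ 2 * lam ^ 2 * ∫ ω, r ω ^ 4 * cosθ ω ^ 2 ∂μ
        - 4 * η ^ 2 * Ψ ^ 2 * ∫ ω, r ω ^ 2 ∂μ := by
  set v : EuclideanSpace ℝ (Fin (d + 1)) := wbar - wt with hv
  have hlam2 : lam ^ 2 ≠ 0 := by positivity
  -- abbreviations
  set p : Ω → ℝ := fun ω => ⟪x ω, v⟫ with hp
  set g : Ω → ℝ := fun ω => Ψ * (4 * η - 8 * η ^ 2 * ‖x ω‖ ^ 2) * p ω with hg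
  set h : Ω → ℝ := fun ω =>
    4 * η * p ω ^ 2 - 4 * η ^ 2 * ‖x ω‖ ^ 2 * p ω ^ 2 - 4 * η ^ 2 * Ψ ^ 2 * ‖x ω‖ ^ 2 with hh
  have hPmeas : Measurable p := hx.inner measurable_const
  -- pointwise forms of r²cos²θ and r⁴cos²θ
  have hc1 : ∀ ω, r ω ^ 2 * cosθ ω ^ 2 = p ω ^ 2 / lam ^ 2 := by
    intro ω
    rw [hcos, hr]
    by_cases h0 : x ω = 0
    · simp [hp, h0]
    · have hn : ‖x ω‖ ≠ 0 := norm_ne_zero_iff.mpr h0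
      field_simp [hp]
      ring
  have hc2 : ∀ ω, r ω ^ 4 * cosθ ω ^ 2 = ‖x ω‖ ^ 2 * p ω ^ 2 / lam ^ 2 := by
    intro ω
    rw [hcos, hr]
    by_cases h0 : x ω = 0
    · simp [hp, h0]
    · have hn : ‖x ω‖ ≠ 0 := norm_ne_zero_iff.mpr h0
      field_simp [hp]
      ring
  -- pointwise key identity
  have key : ∀ ω, ‖wt - wbar‖ ^ 2 - ‖(wt + s ω) - wbar‖ ^ 2 = h ω + ε ω * g ω := by
    intro ω
    have hs' : s ω = (2 * η * (p ω + ε ω * Ψ)) • x ω := by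
      rw [hs, hy]
      congr 1
      simp only [hp, hv, inner_sub_right]
      ring
    have h1 : (wt + s ω) - wbar = s ω - v := by rw [hv]; abel
    have h2 : wt - wbar = -v := by rw [hv]; abel
    have expand : ‖wt - wbar‖ ^ 2 - ‖(wt + s ω) - wbar‖ ^ 2
        = 2 * ⟪s ω, v⟫ - ‖s ω‖ ^ 2 := by
      have e2 := norm_sub_sq_real (s ω) v
      rw [h1, h2, norm_neg, e2]; ring
    rw [expand, hs', real_inner_smul_left, norm_smul, mul_pow, Real.norm_eq_abs, sq_abs]
    rcases hεval ω with he | he <;> rw [hh, hg] <;> simp only [← hp, he] <;> ring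
  -- integrability
  have iP2 : Integrable (fun ω => p ω ^ 2) μ := by
    refine (hInt1.const_mul (lam ^ 2)).congr
      (Filter.Eventually.of_forall fun ω => ?_)
    show lam ^ 2 * (r ω ^ 2 * cosθ ω ^ 2) = p ω ^ 2
    rw [hc1 ω, mul_div_cancel₀ _ hlam2]
  have iXP2 : Integrable (fun ω => ‖x ω‖ ^ 2 * p ω ^ 2) μ := by
    refine (hInt2.const_mul (lam ^ 2)).congr
      (Filter.Eventually.of_forall fun ω => ?_)
    show lam ^ 2 * (r ω ^ 4 * cosθ ω ^ 2) = ‖x ω‖ ^ 2 * p ω ^ 2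
    rw [hc2 ω, mul_div_cancel₀ _ hlam2]
  have iX2 : Integrable (fun ω => ‖x ω‖ ^ 2) μ := by
    refine hInt3.congr (Filter.Eventually.of_forall fun ω => ?_)
    simp only [hr]
  have ih : Integrable h μ := by
    refine (((iP2.const_mul (4 * η)).sub (iXP2.const_mul (4 * η ^ 2))).sub
      (iX2.const_mul (4 * η ^ 2 * Ψ ^ 2))).congr
      (Filter.Eventually.of_forall fun ω => ?_)
    show 4 * η * p ω ^ 2 - 4 * η ^ 2 * (‖x ω‖ ^ 2 * p ω ^ 2)
        - 4 * η ^ 2 * Ψ ^ 2 * ‖x ω‖ ^ 2 = h ω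
    rw [hh]; ring
  have iεg : Integrable (fun ω => ε ω * g ω) μ := by
    refine (hInt5.sub ih).congr (Filter.Eventually.of_forall fun ω => ?_)
    show (‖wt - wbar‖ ^ 2 - ‖(wt + s ω) - wbar‖ ^ 2) - h ω = ε ω * g ω
    rw [key ω]; ring
  have gmeas : Measurable g := by
    apply Measurable.mul _ hPmeas
    exact measurable_const.mul (measurable_const.sub
      (measurable_const.mul (hx.norm.pow measurable_const)))
  have ig : Integrable g μ := by
    refine iεg.mono gmeas.aestronglyMeasurable (Filter.Eventually.of_forall fun ω => ?_)
    rcases hεval ω with he | he <;> simp [he, abs_mul]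
  have iε : Integrable ε μ := by
    refine (integrable_const (1 : ℝ)).mono hε.aestronglyMeasurable
      (Filter.Eventually.of_forall fun ω => ?_)
    rcases hεval ω with he | he <;> simp [he]
  -- E[ε] = 0
  have hA : MeasurableSet {ω | ε ω = 1} := hε (measurableSet_singleton 1)
  have hεrepr : ε = fun ω => Set.indicator {ω | ε ω = 1} (fun _ => (2 : ℝ)) ω - 1 := by
    funext ω
    rcases hεval ω with he | he <;> simp [Set.indicator, he] <;> norm_num
  have iind : Integrable (fun ω => Set.indicator {ω | ε ω = 1} (fun _ => (2 : ℝ)) ω) μ :=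
    (integrable_const (2 : ℝ)).indicator hA
  have Eε : ∫ ω, ε ω ∂μ = 0 := by
    rw [hεrepr]
    rw [integral_sub iind (integrable_const 1), integral_indicator_const _ hA, measureReal_def, hεhalf,
      integral_const]
    simp
  -- E[ε g] = 0 by independence
  have hindg : IndepFun ε g μ := by
    have := hindep.comp measurable_id
      (show Measurable fun z : EuclideanSpace ℝ (Fin (d + 1)) =>
        Ψ * (4 * η - 8 * η ^ 2 * ‖z‖ ^ 2) * ⟪z, v⟫ from
        ((measurable_const.mul (measurable_const.sub
          (measurable_const.mul (measurable_norm.pow measurable_const)))).mul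
          (measurable_id.inner measurable_const)))
    exact this
  have Eεg : ∫ ω, ε ω * g ω ∂μ = 0 := by
    have h0 : (fun ω => ε ω * g ω) = ε * g := rfl
    rw [h0, hindg.integral_mul_eq_mul_integral iε.aestronglyMeasurable ig.aestronglyMeasurable, Eε, zero_mul]
  -- assemble
  have LHS : ∫ ω, (‖wt - wbar‖ ^ 2 - ‖(wt + s ω) - wbar‖ ^ 2) ∂μ
      = ∫ ω, h ω ∂μ := by
    rw [integral_congr_ae (Filter.Eventually.of_forall key),
      integral_add ih iεg, Eεg, add_zero]
  have Hh : ∫ ω, h ω ∂μ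
      = 4 * η * ∫ ω, p ω ^ 2 ∂μ - 4 * η ^ 2 * ∫ ω, ‖x ω‖ ^ 2 * p ω ^ 2 ∂μ
        - 4 * η ^ 2 * Ψ ^ 2 * ∫ ω, ‖x ω‖ ^ 2 ∂μ := by
    have e : h = fun ω => ((4 * η) * p ω ^ 2 - (4 * η ^ 2) * (‖x ω‖ ^ 2 * p ω ^ 2))
        - (4 * η ^ 2 * Ψ ^ 2) * ‖x ω‖ ^ 2 := by
      funext ω; rw [hh]; ring
    have i1 : Integrable (fun ω => (4 * η) * p ω ^ 2) μ := iP2.const_mul _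
    have i2 : Integrable (fun ω => (4 * η ^ 2) * (‖x ω‖ ^ 2 * p ω ^ 2)) μ := iXP2.const_mul _
    have i3 : Integrable (fun ω => (4 * η ^ 2 * Ψ ^ 2) * ‖x ω‖ ^ 2) μ := iX2.const_mul _
    have i12 : Integrable (fun ω => (4 * η) * p ω ^ 2
        - (4 * η ^ 2) * (‖x ω‖ ^ 2 * p ω ^ 2)) μ := i1.sub i2
    rw [e, integral_sub i12 i3, integral_sub i1 i2,
      integral_const_mul, integral_const_mul, integral_const_mul]
  have R1 : ∫ ω, r ω ^ 2 * cosθ ω ^ 2 ∂μ = (∫ ω, p ω ^ 2 ∂μ) / lam ^ 2 := by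
    rw [← integral_div]
    exact integral_congr_ae (Filter.Eventually.of_forall hc1)
  have R2 : ∫ ω, r ω ^ 4 * cosθ ω ^ 2 ∂μ = (∫ ω, ‖x ω‖ ^ 2 * p ω ^ 2 ∂μ) / lam ^ 2 := by
    rw [← integral_div]
    exact integral_congr_ae (Filter.Eventually.of_forall hc2)
  have R3 : ∫ ω, r ω ^ 2 ∂μ = ∫ ω, ‖x ω‖ ^ 2 ∂μ :=
    integral_congr_ae (Filter.Eventually.of_forall fun ω => by simp only [hr])
  rw [LHS, Hh, R1, R2, R3]
  field_simp
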